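/- Let d ≥ 1 and let g be a function defined on the cube {−1,1}^d with values in {−1,0,1} that is not identically zero on the cube. Then there exists a polynomial p ∈ MvPolynomial (Fin d) ℝ with totalDegree p ≤ d − 1 such that for every cube point u the sign of p(u) equals g(u) (that is, p(u) > 0 if g(u) = 1, p(u) < 0 if g(u) = −1, and p(u) = 0 if g(u) = 0), if and only if there exist cube points u and v with g(u)·parity(u) > 0 and g(v)·parity(v) < 0. -/
import Mathlib


/-- `u` is a point of the cube `{−1,1}^d`. -/
def Cube {d : ℕ} (u : Fin d → ℝ) : Prop := ∀ i, u i = 1 ∨ u i = -1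

namespace SPaux

variable {d : ℕ}

noncomputable def eb (b : Fin d → Bool) : Fin d → ℝ := fun i => if b i then 1 else -1

lemma cube_eb (b : Fin d → Bool) : Cube (eb b) := fun i => by
  unfold eb; split <;> simp

lemma eb_sq (b : Fin d → Bool) (i : Fin d) : eb b i * eb b i = 1 := by
  unfold eb; split <;> norm_num

lemma eb_bOf {u : Fin d → ℝ} (hu : Cube u) : eb (fun i => decide (0 < u i)) = u := by
  funext i
  rcases hu i with h | h <;> simp [eb, h] <;> norm_num

lemma eb_inj : Function.Injective (eb (d := d)) := by
  intro a b h
  funext i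
  have := congrFun h i
  unfold eb at this
  by_cases ha : a i <;> by_cases hb : b i <;> simp [ha, hb] at this ⊢ <;> norm_num at this

lemma parity_cube {u : Fin d → ℝ} (hu : Cube u) : (∏ i, u i) = 1 ∨ (∏ i, u i) = -1 := by
  refine Finset.prod_induction u (fun x => x = 1 ∨ x = -1) ?_ (Or.inl rfl) (fun i _ => hu i)
  rintro a b (ha | ha) (hb | hb) <;> simp [ha, hb]

lemma delta {u : Fin d → ℝ} (hu : Cube u) (b : Fin d → Bool) :
    (∏ i, (1 + eb b i * u i)) = if u = eb b then (2 : ℝ) ^ d else 0 := by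
  split
  · next h =>
    subst h
    have : ∀ i ∈ Finset.univ, (1 + eb b i * eb b i) = 2 := fun i _ => by rw [eb_sq]; norm_num
    rw [Finset.prod_congr rfl this]
    simp
  · next h =>
    have : ∃ i, u i ≠ eb b i := by
      by_contra hc
      push_neg at hc
      exact h (funext hc)
    obtain ⟨i, hi⟩ := this
    refine Finset.prod_eq_zero (Finset.mem_univ i) ?_
    rcases hu i with h1 | h1 <;> rcases cube_eb b i with h2 | h2 <;>
      simp [h1, h2] at hi ⊢ <;> norm_num

open MvPolynomial in
noncomputable def q (b : Fin d → Bool) : MvPolynomial (Fin d) ℝ :=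
  (∏ i, (C (eb b i) * X i + C 1)) - C (∏ i, eb b i) * ∏ i, X i

open MvPolynomial in
lemma q_expand (b : Fin d → Bool) :
    q b = ∑ t ∈ Finset.univ.powerset.erase Finset.univ,
      (∏ i ∈ t, (C (eb b i) * X i)) * ∏ i ∈ (Finset.univ \ t), (C 1 : MvPolynomial (Fin d) ℝ) := by
  unfold q
  rw [Finset.prod_add]
  rw [← Finset.add_sum_erase _ _ (Finset.mem_powerset_self _)]
  have : (∏ i ∈ (Finset.univ : Finset (Fin d)), (C (eb b i) * X i)) * ∏ i ∈ ((Finset.univ : Finset (Fin d)) \ Finset.univ), (C 1 : MvPolynomial (Fin d) ℝ)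
      = C (∏ i, eb b i) * ∏ i, X i := by
    simp [Finset.prod_mul_distrib, map_prod]
  rw [this]
  ring

open MvPolynomial in
lemma q_degree (hd : 1 ≤ d) (b : Fin d → Bool) : (q b).totalDegree ≤ d - 1 := by
  rw [q_expand]
  refine le_trans (totalDegree_finset_sum _ _) ?_
  refine Finset.sup_le ?_
  intro t ht
  rw [Finset.mem_erase, Finset.mem_powerset] at ht
  have htcard : t.card < d := by
    have h1 : t.card ≤ d := le_trans (Finset.card_le_card ht.2) (by simp)
    rcases lt_or_eq_of_le h1 with h | h
    · exact h
    · exfalso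
      exact ht.1 (Finset.eq_univ_of_card t (by simpa using h))
  calc ((∏ i ∈ t, (C (eb b i) * X i)) * ∏ i ∈ (Finset.univ \ t), (C 1 : MvPolynomial (Fin d) ℝ)).totalDegree
      ≤ (∏ i ∈ t, (C (eb b i) * X i)).totalDegree + (∏ i ∈ (Finset.univ \ t), (C 1 : MvPolynomial (Fin d) ℝ)).totalDegree := totalDegree_mul _ _
    _ ≤ t.card := by
        simp only [totalDegree_C, map_one]
        rw [Finset.prod_const_one]
        simp only [totalDegree_one, add_zero]
        refine le_trans (totalDegree_finset_prod _ _) ?_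
        calc (∑ i ∈ t, (C (eb b i) * X i).totalDegree) ≤ ∑ _i ∈ t, 1 := by
              refine Finset.sum_le_sum ?_
              intro i _
              refine le_trans (totalDegree_mul _ _) ?_
              simp [totalDegree_X]
          _ = t.card := by simp
    _ ≤ d - 1 := by omega

open MvPolynomial in
lemma q_eval {u : Fin d → ℝ} (hu : Cube u) (b : Fin d → Bool) :
    eval u (q b) = (if u = eb b then (2 : ℝ) ^ d else 0) - (∏ i, eb b i) * ∏ i, u i := by
  unfold q
  rw [← delta hu b]
  simp [add_comm, mul_comm]

lemma eb_update (b : Fin d → Bool) (j i : Fin d) :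
    eb (Function.update b j (!b j)) i = if i = j then -eb b i else eb b i := by
  unfold eb
  by_cases h : i = j
  · subst h; simp [Function.update_self]; cases b i <;> simp
  · simp [Function.update_of_ne h, h]

lemma inner_sum_zero (m : Fin d →₀ ℕ) (j : Fin d) (hj : Even (m j)) :
    ∑ b : Fin d → Bool, (∏ i, eb b i ^ (m i + 1)) = 0 := by
  refine Finset.sum_involution (fun b _ => Function.update b j (!b j)) ?_ ?_ (fun _ _ => Finset.mem_univ _) ?_
  · intro b _
    have key : (∏ i, eb (Function.update b j (!b j)) i ^ (m i + 1))
        = -(∏ i, eb b i ^ (m i + 1)) := by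
      rw [← Finset.mul_prod_erase Finset.univ _ (Finset.mem_univ j),
          ← Finset.mul_prod_erase Finset.univ (fun i => eb b i ^ (m i + 1)) (Finset.mem_univ j)]
      have h1 : ∀ i ∈ Finset.univ.erase j, eb (Function.update b j (!b j)) i ^ (m i + 1) = eb b i ^ (m i + 1) := by
        intro i hi
        rw [eb_update]
        simp [Finset.mem_erase.mp hi |>.1]
      rw [Finset.prod_congr rfl h1, eb_update, if_pos rfl, (Even.add_one hj).neg_pow]
      ring
    rw [key]; ring
  · intro b _ _ h
    have := congrFun h j
    simp [Function.update_self] at this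
  · intro b _
    funext i
    by_cases h : i = j
    · subst h; simp [Function.update_self]
    · simp [Function.update_of_ne h]

open MvPolynomial in
lemma sum_parity_eval_eq_zero (hd : 1 ≤ d) (p : MvPolynomial (Fin d) ℝ)
    (hp : p.totalDegree ≤ d - 1) :
    ∑ b : Fin d → Bool, (∏ i, eb b i) * eval (eb b) p = 0 := by
  have hev : ∀ b : Fin d → Bool, eval (eb b) p = ∑ m ∈ p.support, coeff m p * ∏ i, eb b i ^ m i :=
    fun b => eval_eq' _ _
  calc ∑ b : Fin d → Bool, (∏ i, eb b i) * eval (eb b) p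
      = ∑ b : Fin d → Bool, ∑ m ∈ p.support, coeff m p * ∏ i, eb b i ^ (m i + 1) := by
        refine Finset.sum_congr rfl fun b _ => ?_
        rw [hev b, Finset.mul_sum]
        refine Finset.sum_congr rfl fun m _ => ?_
        rw [mul_left_comm]
        congr 1
        rw [← Finset.prod_mul_distrib]
        exact Finset.prod_congr rfl fun i _ => by rw [pow_succ, mul_comm]
    _ = ∑ m ∈ p.support, coeff m p * ∑ b : Fin d → Bool, ∏ i, eb b i ^ (m i + 1) := by
        rw [Finset.sum_comm]
        exact Finset.sum_congr rfl fun m _ => by rw [Finset.mul_sum]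
    _ = 0 := by
        refine Finset.sum_eq_zero fun m hm => ?_
        have hdeg : (∑ i, m i) ≤ d - 1 := by
          have := MvPolynomial.le_totalDegree hm
          have h2 : (m.sum fun _ e => e) = ∑ i, m i := by
            rw [Finsupp.sum_fintype]; simp
          omega
        have : ∃ j, Even (m j) := by
          by_contra hc
          push_neg at hc
          have : ∀ j, 1 ≤ m j := fun j => Nat.one_le_iff_ne_zero.mpr (fun h0 => hc j (h0 ▸ Even.zero))
          have : d ≤ ∑ i, m i := by
            calc d = ∑ _i : Fin d, 1 := by simp
              _ ≤ ∑ i, m i := Finset.sum_le_sum fun i _ => this i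
          omega
        obtain ⟨j, hj⟩ := this
        rw [inner_sum_zero m j hj, mul_zero]


lemma sign_mul_pm {x c : ℝ} (hc : c = 1 ∨ c = -1) : Real.sign x * c = Real.sign (x * c) := by
  rcases hc with rfl | rfl
  · simp
  · simp only [mul_neg_one]
    rw [Real.sign_neg]

end SPaux

open SPaux MvPolynomial

/-- A nonzero sign pattern `g` on the cube `{−1,1}^d` is realized by a polynomial of
total degree at most `d − 1` iff `g` agrees with parity somewhere and disagrees with
parity somewhere (on the points where it is nonzero). -/
theorem sign_pattern_degree_le_pred {d : ℕ} (hd : 1 ≤ d)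
    (g : (Fin d → ℝ) → ℝ)
    (hval : ∀ u : Fin d → ℝ, Cube u → g u = -1 ∨ g u = 0 ∨ g u = 1)
    (hnz : ∃ u : Fin d → ℝ, Cube u ∧ g u ≠ 0) :
    (∃ p : MvPolynomial (Fin d) ℝ, p.totalDegree ≤ d - 1 ∧
        ∀ u : Fin d → ℝ, Cube u → Real.sign (MvPolynomial.eval u p) = g u) ↔
      ((∃ u : Fin d → ℝ, Cube u ∧ 0 < g u * ∏ i, u i) ∧
        (∃ v : Fin d → ℝ, Cube v ∧ g v * ∏ i, v i < 0)) := by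
  constructor
  · -- forward
    rintro ⟨p, hdeg, hsign⟩
    set T : (Fin d → Bool) → ℝ := fun b => (∏ i, eb b i) * eval (eb b) p with hT
    have hsum : ∑ b : Fin d → Bool, T b = 0 := sum_parity_eval_eq_zero hd p hdeg
    obtain ⟨u, hu, hgu⟩ := hnz
    have hb0 : eb (fun i => decide (0 < u i)) = u := eb_bOf hu
    have hT0 : T (fun i => decide (0 < u i)) ≠ 0 := by
      simp only [hT, hb0]
      refine mul_ne_zero ?_ ?_
      · rcases parity_cube hu with h | h <;> rw [h] <;> norm_num
      · intro h
        exact hgu (by rw [← hsign u hu, h, Real.sign_zero])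
    have hexists : (∃ b, 0 < T b) ∧ (∃ b, T b < 0) := by
      constructor
      · by_contra hc
        push_neg at hc
        have hlt : ∑ b : Fin d → Bool, T b < ∑ _b : Fin d → Bool, (0 : ℝ) := by
          refine Finset.sum_lt_sum (fun b _ => hc b) ⟨fun i => decide (0 < u i), Finset.mem_univ _, ?_⟩
          exact lt_of_le_of_ne (hc _) hT0
        simp [hsum] at hlt
      · by_contra hc
        push_neg at hc
        have hlt : ∑ _b : Fin d → Bool, (0 : ℝ) < ∑ b : Fin d → Bool, T b := by
          refine Finset.sum_lt_sum (fun b _ => hc b) ⟨fun i => decide (0 < u i), Finset.mem_univ _, ?_⟩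
          exact lt_of_le_of_ne (hc _) (Ne.symm hT0)
        simp [hsum] at hlt
    obtain ⟨⟨b1, hb1⟩, ⟨b2, hb2⟩⟩ := hexists
    constructor
    · refine ⟨eb b1, cube_eb b1, ?_⟩
      rw [← hsign (eb b1) (cube_eb b1),
        sign_mul_pm (parity_cube (cube_eb b1)), mul_comm]
      rw [Real.sign_of_pos hb1]
      norm_num
    · refine ⟨eb b2, cube_eb b2, ?_⟩
      rw [← hsign (eb b2) (cube_eb b2),
        sign_mul_pm (parity_cube (cube_eb b2)), mul_comm]
      rw [Real.sign_of_neg hb2]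
      norm_num
  · -- backward
    rintro ⟨⟨u0, hu0, hgu0⟩, ⟨v0, hv0, hgv0⟩⟩
    classical
    set x : (Fin d → Bool) → ℝ := fun b => g (eb b) * ∏ i, eb b i with hx
    set P : ℝ := ∑ b : Fin d → Bool, (if 0 < x b then x b else 0) with hP
    set N : ℝ := ∑ b : Fin d → Bool, (if x b < 0 then -x b else 0) with hN
    have hPpos : 0 < P := by
      refine Finset.sum_pos' (fun b _ => by split <;> linarith) ?_
      refine ⟨fun i => decide (0 < u0 i), Finset.mem_univ _, ?_⟩
      have h0 : x (fun i => decide (0 < u0 i)) = g u0 * ∏ i, u0 i := by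
        simp only [hx, eb_bOf hu0]
      rw [h0, if_pos hgu0]; exact hgu0
    have hNpos : 0 < N := by
      refine Finset.sum_pos' (fun b _ => by split <;> linarith) ?_
      refine ⟨fun i => decide (0 < v0 i), Finset.mem_univ _, ?_⟩
      have h0 : x (fun i => decide (0 < v0 i)) = g v0 * ∏ i, v0 i := by
        simp only [hx, eb_bOf hv0]
      rw [h0, if_pos hgv0]
      linarith
    set f : (Fin d → Bool) → ℝ := fun b =>
      if 0 < x b then g (eb b) / P else if x b < 0 then g (eb b) / N else 0 with hf
    have hfpar : ∑ b : Fin d → Bool, f b * ∏ i, eb b i = 0 := by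
      have step : ∀ b : Fin d → Bool, f b * ∏ i, eb b i =
          (if 0 < x b then x b else 0) / P + (if x b < 0 then x b else 0) / N := by
        intro b
        simp only [hf]
        by_cases h1 : 0 < x b
        · rw [if_pos h1, if_pos h1, if_neg (by linarith), div_mul_eq_mul_div, hx]
          simp
        · rw [if_neg h1, if_neg h1]
          by_cases h2 : x b < 0
          · rw [if_pos h2, if_pos h2, div_mul_eq_mul_div, hx]
            simp
          · rw [if_neg h2, if_neg h2]
            simp
      rw [Finset.sum_congr rfl (fun b _ => step b), Finset.sum_add_distrib,
        ← Finset.sum_div, ← Finset.sum_div, ← hP]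
      have hsumneg : ∑ b : Fin d → Bool, (if x b < 0 then x b else 0) = -N := by
        rw [hN, ← Finset.sum_neg_distrib]
        refine Finset.sum_congr rfl fun b _ => ?_
        by_cases h : x b < 0 <;> simp [h]
      rw [hsumneg, div_self (ne_of_gt hPpos), neg_div, div_self (ne_of_gt hNpos)]
      ring
    set p : MvPolynomial (Fin d) ℝ := C ((2:ℝ)^d)⁻¹ * ∑ b : Fin d → Bool, C (f b) * q b with hp
    have hdeg : p.totalDegree ≤ d - 1 := by
      rw [hp]
      refine le_trans (totalDegree_mul _ _) ?_
      rw [totalDegree_C, zero_add]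
      refine le_trans (totalDegree_finset_sum _ _) (Finset.sup_le fun b _ => ?_)
      refine le_trans (totalDegree_mul _ _) ?_
      rw [totalDegree_C, zero_add]
      exact q_degree hd b
    have heval : ∀ u : Fin d → ℝ, Cube u → eval u p = f (fun i => decide (0 < u i)) := by
      intro u hu
      have hb0 : eb (fun i => decide (0 < u i)) = u := eb_bOf hu
      rw [hp, map_mul, eval_C, map_sum]
      have hterm : ∀ b : Fin d → Bool, eval u (C (f b) * q b) =
          (if b = (fun i => decide (0 < u i)) then f b * (2:ℝ)^d else 0)
            - f b * ((∏ i, eb b i) * ∏ i, u i) := by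
        intro b
        rw [map_mul, eval_C, q_eval hu b]
        have hiff : u = eb b ↔ b = (fun i => decide (0 < u i)) := by
          constructor
          · intro h; exact (eb_inj (by rw [hb0, h])).symm
          · intro h; rw [h, hb0]
        by_cases h : u = eb b
        · rw [if_pos h, if_pos (hiff.mp h)]; ring
        · rw [if_neg h, if_neg (fun hh => h (hiff.mpr hh))]; ring
      rw [Finset.sum_congr rfl (fun b _ => hterm b), Finset.sum_sub_distrib,
        Finset.sum_ite_eq' Finset.univ (fun i => decide (0 < u i)) (fun b => f b * (2:ℝ)^d),
        if_pos (Finset.mem_univ _)]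
      have h2 : ∑ b : Fin d → Bool, f b * ((∏ i, eb b i) * ∏ i, u i)
          = (∑ b : Fin d → Bool, f b * ∏ i, eb b i) * ∏ i, u i := by
        rw [Finset.sum_mul]
        exact Finset.sum_congr rfl fun b _ => by ring
      rw [h2, hfpar, zero_mul, sub_zero]
      field_simp
    refine ⟨p, hdeg, ?_⟩
    intro u hu
    rw [heval u hu]
    have hb0 : eb (fun i => decide (0 < u i)) = u := eb_bOf hu
    have hxu : x (fun i => decide (0 < u i)) = g u * ∏ i, u i := by
      simp only [hx, hb0]
    simp only [hf, hxu, hb0]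
    by_cases h1 : 0 < g u * ∏ i, u i
    · rw [if_pos h1]
      rcases hval u hu with h | h | h
      · rw [h, Real.sign_of_neg (div_neg_of_neg_of_pos (by norm_num) hPpos)]
      · exact absurd h1 (by rw [h]; simp)
      · rw [h, Real.sign_of_pos (div_pos one_pos hPpos)]
    · rw [if_neg h1]
      by_cases h2 : g u * ∏ i, u i < 0
      · rw [if_pos h2]
        rcases hval u hu with h | h | h
        · rw [h, Real.sign_of_neg (div_neg_of_neg_of_pos (by norm_num) hNpos)]
        · exact absurd h2 (by rw [h]; simp)
        · rw [h, Real.sign_of_pos (div_pos one_pos hNpos)]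
      · rw [if_neg h2]
        have hgz : g u = 0 := by
          have hprod : (∏ i, u i) ≠ 0 := by
            rcases parity_cube hu with h | h <;> rw [h] <;> norm_num
          have : g u * ∏ i, u i = 0 := le_antisymm (not_lt.mp h1) (not_lt.mp h2)
          exact (mul_eq_zero.mp this).resolve_right hprod
        rw [hgz, Real.sign_zero]
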